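/- Let K = HahnSeries ℝ ℂ be the field of generalized Laurent series with complex coefficients and real exponents, and for λ ∈ ℝ write s^λ ∈ K for the monomial HahnSeries.single λ 1 (so s = s¹). Let n and k be integers with 0 ≤ k and k+2 ≤ n, let λ be a real number with 0 < λ < (n−k−1)/(n+1), and let Q ∈ K[X] be the polynomial Q = X^{n−k}·(X + C(s^{−λ})·X^{n−k})^{k+1} − C(s), where C denotes the constant-coefficient embedding K → K[X]. Suppose Q splits into linear factors over K. Then, counted with multiplicity, exactly n+1 of the roots of Q in K have ord equal to 1/(n+1) and exactly (n−k−1)(k+1) of the roots have ord equal to λ/(n−k−1), where ord(z) denotes the smallest exponent in the support of a nonzero z ∈ K; in particular deg Q = (n−k)(k+2) = (n+1) + (n−k−1)(k+1) and 0 is not a root of Q. -/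

import Mathlib

open HahnSeries Polynomial

open scoped Classical

/-- The field of generalized Laurent series with complex coefficients and real exponents. -/
abbrev GenLaurent : Type := HahnSeries ℝ ℂ

/-- The monomial `s^λ`. -/
noncomputable def sPow (l : ℝ) : GenLaurent := HahnSeries.single l (1 : ℂ)

lemma sPow_ne_zero (l : ℝ) : sPow l ≠ 0 := HahnSeries.single_ne_zero one_ne_zero

lemma sPow_order (l : ℝ) : (sPow l).order = l := HahnSeries.order_single one_ne_zero

lemma order_add_left {x y : GenLaurent} (hx : x ≠ 0) (h : x.order < y.order) :
    (x + y).order = x.order := by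
  have hc : (x + y).coeff x.order ≠ 0 := by
    rw [HahnSeries.coeff_add, HahnSeries.coeff_eq_zero_of_lt_order h, add_zero]
    exact HahnSeries.coeff_order_eq_zero.not.mpr hx
  refine le_antisymm (HahnSeries.order_le_of_coeff_ne_zero hc) ?_
  have hxy : x + y ≠ 0 := fun h0 => hc (by simp [h0])
  have hmin := HahnSeries.min_order_le_order_add hxy
  rwa [min_eq_left h.le] at hmin

lemma order_prod (t : Multiset GenLaurent) (ht : ∀ x ∈ t, x ≠ 0) :
    t.prod.order = (t.map HahnSeries.order).sum := by
  induction t using Multiset.induction with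
  | empty => simp
  | cons a s ih =>
      have ha : a ≠ 0 := ht a (Multiset.mem_cons_self a s)
      have hs : ∀ x ∈ s, x ≠ 0 := fun x hx => ht x (Multiset.mem_cons_of_mem hx)
      have hsp : s.prod ≠ 0 := Multiset.prod_ne_zero (fun h0 => hs 0 h0 rfl)
      simp [Multiset.prod_cons, HahnSeries.order_mul ha hsp, ih hs]

set_option maxHeartbeats 1000000 in
/-- Newton diagram root count: in the regime `0 < λ < (n−k−1)/(n+1)`, the polynomial
`X^{n−k}(X + s^{−λ} X^{n−k})^{k+1} − s`, assumed to split over `K`, has exactly `n+1` roots of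
order `1/(n+1)` and exactly `(n−k−1)(k+1)` roots of order `λ/(n−k−1)`, counted with
multiplicity; its degree is `(n−k)(k+2) = (n+1) + (n−k−1)(k+1)` and `0` is not a root. -/
theorem newton_diagram_root_count (n k : ℕ) (hk : k + 2 ≤ n) (lam : ℝ)
    (hlam : 0 < lam) (hlam' : lam < ((n : ℝ) - k - 1) / ((n : ℝ) + 1))
    (Q : Polynomial GenLaurent)
    (hQ : Q = X ^ (n - k) * (X + Polynomial.C (sPow (-lam)) * X ^ (n - k)) ^ (k + 1) - Polynomial.C (sPow 1))
    (hsplits : Q.Splits) :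
    (Q.roots.filter (fun z => z.order = 1 / ((n : ℝ) + 1))).card = n + 1 ∧
    (Q.roots.filter (fun z => z.order = lam / ((n : ℝ) - k - 1))).card = (n - k - 1) * (k + 1) ∧
    Q.natDegree = (n - k) * (k + 2) ∧
    (n - k) * (k + 2) = (n + 1) + (n - k - 1) * (k + 1) ∧
    ¬ Q.IsRoot 0 := by
  obtain ⟨d, rfl⟩ := Nat.exists_eq_add_of_le hk
  have hmk : k + 2 + d - k = d + 2 := by omega
  have hmk1 : d + 2 - 1 = d + 1 := by omega
  rw [hmk] at hQ
  rw [hmk, hmk1]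
  -- real cast facts
  have hNcast : ((k + 2 + d : ℕ) : ℝ) = (k : ℝ) + 2 + d := by push_cast; ring
  have hN1 : (0:ℝ) < (k:ℝ) + (d:ℝ) + 3 := by positivity
  have hden : (0:ℝ) < (d:ℝ) + 1 := by positivity
  -- the two candidate orders
  set α : ℝ := 1 / (((k + 2 + d : ℕ) : ℝ) + 1) with hαdef
  set β : ℝ := lam / (((k + 2 + d : ℕ) : ℝ) - (k:ℝ) - 1) with hβdef
  have hα1 : α * ((k:ℝ) + d + 3) = 1 := by rw [hαdef, hNcast]; field_simp; ring
  have hβ1 : β * ((d:ℝ) + 1) = lam := by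
    rw [hβdef, hNcast]
    have : (k : ℝ) + 2 + d - k - 1 = (d:ℝ) + 1 := by ring
    rw [this]; field_simp
  have hlam2 : lam * ((k:ℝ) + d + 3) < (d:ℝ) + 1 := by
    rw [hNcast] at hlam'
    have h2 : ((k:ℝ) + 2 + d - k - 1) = (d:ℝ) + 1 := by ring
    have h3 : ((k:ℝ) + 2 + d + 1) = (k:ℝ) + d + 3 := by ring
    rw [h2, h3] at hlam'
    exact (lt_div_iff₀ hN1).mp hlam'
  have hβα : β < α := by
    rw [hαdef, hβdef, hNcast]
    have h2 : ((k:ℝ) + 2 + d - k - 1) = (d:ℝ) + 1 := by ring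
    have h3 : ((k:ℝ) + 2 + d + 1) = (k:ℝ) + d + 3 := by ring
    rw [h2, h3, div_lt_div_iff₀ hden hN1]
    linarith
  set c : GenLaurent := sPow (-lam) with hcdef
  have hc : c ≠ 0 := sPow_ne_zero _
  -- degree and leading coefficient
  have hinnerdeg : (X + Polynomial.C c * X ^ (d + 2) : Polynomial GenLaurent).natDegree = d + 2 := by
    have h1 : (Polynomial.C c * X ^ (d+2) : Polynomial GenLaurent).natDegree = d + 2 :=
      natDegree_C_mul_X_pow (d+2) c hc
    rw [natDegree_add_eq_right_of_natDegree_lt, h1]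
    rw [h1, natDegree_X]; omega
  have hinner0 : (X + Polynomial.C c * X ^ (d + 2) : Polynomial GenLaurent) ≠ 0 := by
    intro h; rw [h] at hinnerdeg; simp at hinnerdeg
  have hinnerlead : (X + Polynomial.C c * X ^ (d + 2) : Polynomial GenLaurent).leadingCoeff = c := by
    rw [leadingCoeff_add_of_degree_lt, leadingCoeff_C_mul_X_pow]
    rw [degree_C_mul_X_pow (d+2) hc, degree_X]
    exact_mod_cast (by omega : 1 < d + 2)
  have hP1deg : (X ^ (d+2) * (X + Polynomial.C c * X ^ (d+2)) ^ (k+1) : Polynomial GenLaurent).natDegree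
      = (d + 2) * (k + 2) := by
    rw [natDegree_mul (pow_ne_zero _ X_ne_zero) (pow_ne_zero _ hinner0), natDegree_pow,
      natDegree_pow, natDegree_X, hinnerdeg]
    ring
  have hQdeg : Q.natDegree = (d + 2) * (k + 2) := by
    rw [hQ, natDegree_sub_C, hP1deg]
  have hQlead : Q.leadingCoeff = c ^ (k + 1) := by
    have h1 : Q.leadingCoeff = Q.coeff ((d+2)*(k+2)) := by rw [Polynomial.leadingCoeff, hQdeg]
    rw [h1, hQ, Polynomial.coeff_sub, coeff_C, if_neg (by positivity), sub_zero, ← hP1deg,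
      ← Polynomial.leadingCoeff, Polynomial.leadingCoeff_mul, Polynomial.leadingCoeff_pow, Polynomial.leadingCoeff_pow,
      leadingCoeff_X, hinnerlead, one_pow, one_mul]
  have hQ0 : Q.eval 0 = -(sPow 1) := by
    rw [hQ]
    simp [zero_pow (by omega : d + 2 ≠ 0)]
  have hQne : Q ≠ 0 := by
    intro h
    rw [h] at hQ0
    simp at hQ0
    exact sPow_ne_zero 1 hQ0
  have hnotroot : ¬ Q.IsRoot 0 := by
    rw [Polynomial.IsRoot, hQ0]
    simpa using sPow_ne_zero 1
  -- each root is nonzero and has order α or β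
  have hroot : ∀ z ∈ Q.roots, z ≠ 0 ∧ (z.order = α ∨ z.order = β) := by
    intro z hz
    have hzr : Q.IsRoot z := (mem_roots'.mp hz).2
    have heq : z ^ (d+2) * (z + c * z ^ (d+2)) ^ (k+1) = sPow 1 := by
      have h1 := hzr
      rw [Polynomial.IsRoot, hQ] at h1
      simp only [eval_sub, eval_mul, eval_pow, eval_add, eval_C, eval_X] at h1
      exact sub_eq_zero.mp h1
    have hz0 : z ≠ 0 := by
      rintro rfl
      rw [zero_pow (by omega : d + 2 ≠ 0), zero_mul] at heq
      exact sPow_ne_zero 1 heq.symm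
    refine ⟨hz0, ?_⟩
    set a := z.order with hadef
    have hw0 : z + c * z ^ (d+2) ≠ 0 := by
      intro h
      rw [h, zero_pow (by omega : k + 1 ≠ 0), mul_zero] at heq
      exact sPow_ne_zero 1 heq.symm
    have horder : ((d:ℝ)+2) * a + ((k:ℝ)+1) * (z + c * z ^ (d+2)).order = 1 := by
      have h1 := congrArg HahnSeries.order heq
      rw [HahnSeries.order_mul (pow_ne_zero _ hz0) (pow_ne_zero _ hw0),
        HahnSeries.order_pow, HahnSeries.order_pow, sPow_order] at h1
      rw [nsmul_eq_mul, nsmul_eq_mul] at h1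
      push_cast at h1
      linarith
    have hcz : (c * z ^ (d+2)).order = -lam + ((d:ℝ)+2) * a := by
      rw [HahnSeries.order_mul hc (pow_ne_zero _ hz0), HahnSeries.order_pow, hcdef, sPow_order,
        nsmul_eq_mul]
      push_cast; ring
    rcases lt_trichotomy a (lam / ((d:ℝ)+1)) with hlt | heqa | hgt
    · exfalso
      have ha1 : a * ((d:ℝ)+1) < lam := (lt_div_iff₀ hden).mp hlt
      have h1 : (c * z ^ (d+2)).order < z.order := by
        rw [hcz, ← hadef]; nlinarith
      have hworder : (z + c * z ^ (d+2)).order = -lam + ((d:ℝ)+2) * a := by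
        rw [add_comm, order_add_left (mul_ne_zero hc (pow_ne_zero _ hz0)) h1, hcz]
      rw [hworder] at horder
      nlinarith [mul_lt_mul_of_pos_left ha1 (show (0:ℝ) < ((d:ℝ)+2)*((k:ℝ)+2) by positivity)]
    · right
      rw [hβdef, hNcast]
      have h2 : ((k:ℝ) + 2 + d - k - 1) = (d:ℝ) + 1 := by ring
      rw [h2]; exact heqa
    · left
      have ha1 : lam < a * ((d:ℝ)+1) := (div_lt_iff₀ hden).mp hgt
      have h1 : z.order < (c * z ^ (d+2)).order := by
        rw [hcz, ← hadef]; nlinarith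
      have hworder : (z + c * z ^ (d+2)).order = a := order_add_left hz0 h1
      rw [hworder] at horder
      rw [hαdef, hNcast]
      rw [eq_div_iff (by positivity : ((k:ℝ) + 2 + d + 1) ≠ 0)]
      linarith
  -- number of roots
  have hcard : Multiset.card Q.roots = (d + 2) * (k + 2) := by
    rw [← hQdeg]
    exact (splits_iff_card_roots).mp hsplits
  -- product of roots and sum of orders
  have heval0 : -(sPow 1) = c ^ (k+1) * (Q.roots.map fun z => -z).prod := by
    rw [← hQ0]
    conv_lhs => rw [hsplits.eq_prod_roots]
    rw [eval_mul, eval_C, hQlead, eval_multiset_prod, Multiset.map_map]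
    simp
  have hS : (Q.roots.map HahnSeries.order).sum = 1 + ((k:ℝ)+1) * lam := by
    have hne : ∀ x ∈ Q.roots.map (fun z : GenLaurent => -z), x ≠ 0 := by
      intro x hx
      obtain ⟨z, hz, rfl⟩ := Multiset.mem_map.mp hx
      exact neg_ne_zero.mpr (hroot z hz).1
    have hprodne : (Q.roots.map fun z : GenLaurent => -z).prod ≠ 0 :=
      Multiset.prod_ne_zero (fun h0 => hne 0 h0 rfl)
    have h1 := congrArg HahnSeries.order heval0
    rw [HahnSeries.order_neg, sPow_order,
      HahnSeries.order_mul (pow_ne_zero _ hc) hprodne, HahnSeries.order_pow, hcdef, sPow_order,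
      nsmul_eq_mul, order_prod _ hne, Multiset.map_map] at h1
    have h2 : (Q.roots.map (HahnSeries.order ∘ fun z : GenLaurent => -z)) =
        Q.roots.map HahnSeries.order := by
      apply Multiset.map_congr rfl
      intro x _
      exact HahnSeries.order_neg
    rw [h2] at h1
    push_cast at h1
    linarith
  -- partition of roots by order
  have hfilters : Q.roots.filter (fun z => z.order = β) =
      Q.roots.filter (fun z => ¬ z.order = α) := by
    apply Multiset.filter_congr
    intro z hz
    rcases (hroot z hz).2 with h | h
    · simp [h, hβα.ne, hβα.ne']
    · simp [h, hβα.ne, hβα.ne']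
  set A := (Q.roots.filter (fun z => z.order = α)).card with hAdef
  set B := (Q.roots.filter (fun z => z.order = β)).card with hBdef
  have hsplit : Q.roots.filter (fun z => z.order = α) +
      Q.roots.filter (fun z => z.order = β) = Q.roots := by
    rw [hfilters]
    exact Multiset.filter_add_not _ _
  have hAB : A + B = (d + 2) * (k + 2) := by
    rw [hAdef, hBdef, ← Multiset.card_add, hsplit, hcard]
  have hrepl1 : (Q.roots.filter (fun z => z.order = α)).map HahnSeries.order
      = Multiset.replicate A α := by
    rw [Multiset.eq_replicate]
    constructor
    · simp [hAdef]
    · intro b hb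
      obtain ⟨z, hz, rfl⟩ := Multiset.mem_map.mp hb
      exact (Multiset.mem_filter.mp hz).2
  have hrepl2 : (Q.roots.filter (fun z => z.order = β)).map HahnSeries.order
      = Multiset.replicate B β := by
    rw [Multiset.eq_replicate]
    constructor
    · simp [hBdef]
    · intro b hb
      obtain ⟨z, hz, rfl⟩ := Multiset.mem_map.mp hb
      exact (Multiset.mem_filter.mp hz).2
  have hsum : (A:ℝ) * α + (B:ℝ) * β = 1 + ((k:ℝ)+1) * lam := by
    rw [← hS, ← hsplit, Multiset.map_add, Multiset.sum_add, hrepl1, hrepl2,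
      Multiset.sum_replicate, Multiset.sum_replicate, nsmul_eq_mul, nsmul_eq_mul]
  -- solve the linear system
  have hABr : (A:ℝ) + (B:ℝ) = ((d:ℝ) + 2) * ((k:ℝ) + 2) := by exact_mod_cast hAB
  have hsum2 : (A:ℝ) * ((d:ℝ)+1) + (B:ℝ) * lam * ((k:ℝ)+d+3)
      = (1 + ((k:ℝ)+1)*lam) * (((k:ℝ)+d+3) * ((d:ℝ)+1)) := by
    linear_combination (((k:ℝ)+d+3) * ((d:ℝ)+1)) * hsum - ((A:ℝ)*((d:ℝ)+1)) * hα1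
      - ((B:ℝ)*(((k:ℝ)+d+3))) * hβ1
  have key : ((A:ℝ) - ((k:ℝ)+d+3)) * (((d:ℝ)+1) - lam * ((k:ℝ)+d+3)) = 0 := by
    linear_combination hsum2 - lam * ((k:ℝ)+d+3) * hABr
  have hD : ((d:ℝ)+1) - lam * ((k:ℝ)+d+3) ≠ 0 := by
    have : lam * ((k:ℝ)+d+3) < (d:ℝ)+1 := hlam2
    linarith
  have hAr : (A:ℝ) = (k:ℝ)+d+3 := by
    rcases mul_eq_zero.mp key with h | h
    · linarith [sub_eq_zero.mp h]
    · exact absurd h hD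
  have hAnat : A = k + 2 + d + 1 := by
    have : (A:ℝ) = ((k + 2 + d + 1 : ℕ) : ℝ) := by rw [hAr]; push_cast; ring
    exact_mod_cast this
  have hident : (d + 2) * (k + 2) = (k + 2 + d + 1) + (d + 1) * (k + 1) := by ring
  have hBnat : B = (d + 1) * (k + 1) := by omega
  exact ⟨hAnat, hBnat, hQdeg, hident, hnotroot⟩
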